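/- If ψ : ℝ → ℂ² solves the free time-independent Lévy-Leblond equation with γ₊-eigenvalue E, then the function D₊ψ, given by (D₊ψ)(x) = −(1/β) γ₊ ψ″(x) + β γ₋ ψ(x), also solves the free time-independent Lévy-Leblond equation with the same γ₊-eigenvalue E. (The second derivative ψ″ exists because the eigenvalue equation forces ψ′(x) = (iEγ₊ + iβγ₋)ψ(x).) -/

import Mathlib

open Matrix

noncomputable section

/-- The gamma matrix `γ¹ = [[1,0],[0,−1]]`. -/
def γ1 : Matrix (Fin 2) (Fin 2) ℂ := !![1, 0; 0, -1]

/-- The gamma matrix `γ₊ = [[0,1],[0,0]]`. -/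
def γp : Matrix (Fin 2) (Fin 2) ℂ := !![0, 1; 0, 0]

/-- The gamma matrix `γ₋ = [[0,0],[1,0]]`. -/
def γm : Matrix (Fin 2) (Fin 2) ℂ := !![0, 0; 1, 0]

/-- `ψ : ℝ → ℂ²` solves the free time-independent Lévy-Leblond equation
with `γ₊`-eigenvalue `E`: `ψ` is differentiable and
`β γ₋ ψ(x) − i γ¹ ψ′(x) = E γ₊ ψ(x)` for all `x`. -/
def SolvesLL (β E : ℝ) (ψ : ℝ → (Fin 2 → ℂ)) : Prop :=
  Differentiable ℝ ψ ∧
    ∀ x : ℝ, (β : ℂ) • γm.mulVec (ψ x) - Complex.I • γ1.mulVec (deriv ψ x)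
      = (E : ℂ) • γp.mulVec (ψ x)

/-- The operator `P̂`: `(P̂ψ)(x) = −i ψ′(x)`. -/
def Phat (ψ : ℝ → (Fin 2 → ℂ)) : ℝ → (Fin 2 → ℂ) :=
  fun x => (-Complex.I) • deriv ψ x

/-- The operator `D₊`: `(D₊ψ)(x) = −(1/β) γ₊ ψ″(x) + β γ₋ ψ(x)`. -/
def Dplus (β : ℝ) (ψ : ℝ → (Fin 2 → ℂ)) : ℝ → (Fin 2 → ℂ) :=
  fun x => (-(1 / (β : ℂ))) • γp.mulVec (deriv (deriv ψ) x) + (β : ℂ) • γm.mulVec (ψ x)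

/-- The operator `P¹`: `(P¹ψ)(x) = γ¹ ψ(−x)`. -/
def P1 (ψ : ℝ → (Fin 2 → ℂ)) : ℝ → (Fin 2 → ℂ) :=
  fun x => γ1.mulVec (ψ (-x))

/-- mulVec by a fixed matrix, as a real-continuous-linear map. -/
def mulVecCLM (A : Matrix (Fin 2) (Fin 2) ℂ) : (Fin 2 → ℂ) →L[ℝ] (Fin 2 → ℂ) :=
  LinearMap.toContinuousLinearMap ((Matrix.mulVecLin A).restrictScalars ℝ)

lemma mulVecCLM_apply (A : Matrix (Fin 2) (Fin 2) ℂ) (v : Fin 2 → ℂ) :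
    mulVecCLM A v = A.mulVec v := rfl

lemma differentiable_mulVec (A : Matrix (Fin 2) (Fin 2) ℂ) {f : ℝ → Fin 2 → ℂ}
    (hf : Differentiable ℝ f) : Differentiable ℝ (fun x => A.mulVec (f x)) :=
  (mulVecCLM A).differentiable.comp hf

lemma deriv_mulVec (A : Matrix (Fin 2) (Fin 2) ℂ) {f : ℝ → Fin 2 → ℂ}
    (hf : Differentiable ℝ f) (x : ℝ) :
    deriv (fun x => A.mulVec (f x)) x = A.mulVec (deriv f x) := by
  have h := ((mulVecCLM A).hasFDerivAt.comp_hasDerivAt x (hf x).hasDerivAt).deriv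
  simpa [mulVecCLM_apply, Function.comp_def] using h

/-- If `ψ` solves the free time-independent Lévy-Leblond equation
with `γ₊`-eigenvalue `E`, then so does `D₊ψ`. -/
theorem solvesLL_Dplus (β : ℝ) (hβ : 0 < β) (E : ℝ)
    (ψ : ℝ → (Fin 2 → ℂ)) (hψ : SolvesLL β E ψ) :
    SolvesLL β E (Dplus β ψ) := by
  obtain ⟨hd, heq⟩ := hψ
  have hβ' : (β : ℂ) ≠ 0 := by exact_mod_cast hβ.ne'
  set M : Matrix (Fin 2) (Fin 2) ℂ :=
    !![0, Complex.I * E; Complex.I * β, 0] with hM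
  -- the first-order ODE: ψ' = M ψ
  have hder : ∀ x, deriv ψ x = M.mulVec (ψ x) := by
    intro x
    have h0 := congrFun (heq x) 0
    have h1 := congrFun (heq x) 1
    simp [γ1, γm, γp, Matrix.mulVec, dotProduct, Fin.sum_univ_two] at h0 h1
    funext i
    fin_cases i <;>
      simp [hM, Matrix.mulVec, dotProduct, Fin.sum_univ_two]
    · linear_combination Complex.I * h0 + deriv ψ x 0 * Complex.I_sq
    · linear_combination (-Complex.I) * h1 + deriv ψ x 1 * Complex.I_sq
  have hderF : deriv ψ = fun x => M.mulVec (ψ x) := funext hder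
  have hd2 : Differentiable ℝ (deriv ψ) := by
    rw [hderF]; exact differentiable_mulVec M hd
  have hder2 : ∀ x, deriv (deriv ψ) x = M.mulVec (M.mulVec (ψ x)) := by
    intro x
    rw [hderF, deriv_mulVec M hd, hder]
  -- D₊ψ equals N ψ with N = E γ₊ + β γ₋
  set N : Matrix (Fin 2) (Fin 2) ℂ := !![0, (E : ℂ); (β : ℂ), 0] with hN
  have hDp : Dplus β ψ = fun x => N.mulVec (ψ x) := by
    funext x
    rw [Dplus, hder2 x]
    funext i
    fin_cases i
    · simp [hM, hN, γp, γm, Matrix.mulVec, dotProduct, Fin.sum_univ_two]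
      field_simp
      linear_combination (-(E : ℂ) * ψ x 1) * Complex.I_sq
    · simp [hM, hN, γp, γm, Matrix.mulVec, dotProduct, Fin.sum_univ_two]
  constructor
  · rw [hDp]; exact differentiable_mulVec N hd
  · intro x
    have hD2 : deriv (Dplus β ψ) x = N.mulVec (M.mulVec (ψ x)) := by
      rw [hDp, deriv_mulVec N hd x, hder]
    rw [hD2, hDp]
    funext i
    fin_cases i
    · simp [hM, hN, γ1, γp, γm, Matrix.mulVec, dotProduct, Fin.sum_univ_two]
      linear_combination (-(β : ℂ) * ψ x 0 * E) * Complex.I_sq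
    · simp [hM, hN, γ1, γp, γm, Matrix.mulVec, dotProduct, Fin.sum_univ_two]
      linear_combination ((β : ℂ) * E * ψ x 1) * Complex.I_sq
end
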